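/- (3.6(a).) Let 𝕜 be an algebraically closed field of characteristic 2 and V a 𝕜-vector space of dimension 2n with n ≥ 2. Let Q : V → 𝕜 be a quadratic form whose polar form ⟨x,y⟩ = Q(x+y) + Q(x) + Q(y) is nondegenerate. Let σ be an odd positive integer and p_1 ≥ ⋯ ≥ p_σ ≥ 1 integers with p_1+⋯+p_σ = n. Let g : V → V be a bijective linear map with Q(g x) = Q(x) for all x. Suppose v_1, …, v_σ ∈ V are nonzero vectors such that for every r ∈ {1,…,σ}: (i) ⟨g^i v_t, v_r⟩ = 0 for all t < r and all integers i with −p_t ≤ i ≤ p_t − 1; (ii) ⟨v_r, g^i v_r⟩ = 0 for all i with −p_r + 1 ≤ i ≤ p_r − 1, and Q(v_r) = 0; (iii) ⟨v_r, g^{p_r} v_r⟩ ≠ 0. Then the 2n vectors g^{−p_t+i} v_t, for t ∈ {1,…,σ} and 0 ≤ i ≤ 2p_t − 1, form a basis of V. -/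

import Mathlib

open Module

theorem Sg_family_is_basis
    (𝕜 : Type*) [Field 𝕜] [IsAlgClosed 𝕜] [CharP 𝕜 2]
    (V : Type*) [AddCommGroup V] [Module 𝕜 V] [FiniteDimensional 𝕜 V]
    (n : ℕ) (hn : 2 ≤ n) (hdimV : finrank 𝕜 V = 2 * n)
    (Q : QuadraticForm 𝕜 V)
    (hQnd : ∀ x : V, (∀ y : V, Q (x + y) + Q x + Q y = 0) → x = 0)
    (σ : ℕ) (hσ : 1 ≤ σ) (hσodd : Odd σ)
    (p : ℕ → ℕ)
    (hp1 : ∀ r, 1 ≤ r → r ≤ σ → 1 ≤ p r)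
    (hmono : ∀ r, 1 ≤ r → r < σ → p (r + 1) ≤ p r)
    (hpn : (∑ r ∈ Finset.Icc 1 σ, p r) = n)
    (g : V ≃ₗ[𝕜] V)
    (hg : ∀ x : V, Q (g x) = Q x)
    (v : ℕ → V)
    (hv0 : ∀ r ∈ Finset.Icc 1 σ, v r ≠ 0)
    (hv1 : ∀ r ∈ Finset.Icc 1 σ, ∀ t ∈ Finset.Icc 1 σ, t < r →
      ∀ i : ℤ, -(p t : ℤ) ≤ i → i ≤ (p t : ℤ) - 1 →
        Q ((g ^ i) (v t) + v r) + Q ((g ^ i) (v t)) + Q (v r) = 0)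
    (hv2 : ∀ r ∈ Finset.Icc 1 σ, ∀ i : ℤ, -(p r : ℤ) + 1 ≤ i → i ≤ (p r : ℤ) - 1 →
        Q (v r + (g ^ i) (v r)) + Q (v r) + Q ((g ^ i) (v r)) = 0)
    (hv2' : ∀ r ∈ Finset.Icc 1 σ, Q (v r) = 0)
    (hv3 : ∀ r ∈ Finset.Icc 1 σ,
      Q (v r + (g ^ (p r : ℤ)) (v r)) + Q (v r) + Q ((g ^ (p r : ℤ)) (v r)) ≠ 0) :
    LinearIndependent 𝕜
      (fun ti : Σ t : Fin σ, Fin (2 * p (t.1 + 1)) =>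
        (g ^ ((ti.2 : ℤ) - (p (ti.1.1 + 1) : ℤ))) (v (ti.1.1 + 1))) ∧
    Submodule.span 𝕜
      (Set.range (fun ti : Σ t : Fin σ, Fin (2 * p (t.1 + 1)) =>
        (g ^ ((ti.2 : ℤ) - (p (ti.1.1 + 1) : ℤ))) (v (ti.1.1 + 1)))) = ⊤ := by
  classical
  -- basic facts about the polar form
  have hQz : ∀ (i : ℤ) (x : V), Q ((g ^ i) x) = Q x := by
    have hginv : ∀ x : V, Q (g⁻¹ x) = Q x := by
      intro x
      have h := hg (g⁻¹ x)
      rw [show g (g⁻¹ x) = x from g.apply_symm_apply x] at h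
      exact h.symm
    intro i
    induction i using Int.induction_on with
    | zero => intro x; simp
    | succ k ih =>
      intro x
      have h1 : (g ^ ((k : ℤ) + 1)) x = (g ^ (k : ℤ)) (g x) := by rw [zpow_add_one]; rfl
      rw [h1, ih, hg]
    | pred k ih =>
      intro x
      have h1 : (g ^ (-(k : ℤ) - 1)) x = (g ^ (-(k : ℤ))) (g⁻¹ x) := by rw [zpow_sub_one]; rfl
      rw [h1, ih, hginv]
  have hBeq : ∀ x y : V, QuadraticMap.polar Q x y = Q (x + y) + Q x + Q y := by
    intro x y
    rw [QuadraticMap.polar, CharTwo.sub_eq_add, CharTwo.sub_eq_add]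
  have hBz : ∀ (k : ℤ) (x y : V),
      QuadraticMap.polar Q ((g ^ k) x) ((g ^ k) y) = QuadraticMap.polar Q x y := by
    intro k x y
    rw [hBeq, hBeq, ← map_add (g ^ k), hQz, hQz, hQz]
  have hBshift : ∀ (a b : ℤ) (x y : V),
      QuadraticMap.polar Q ((g ^ a) x) ((g ^ b) y)
        = QuadraticMap.polar Q ((g ^ (a - b)) x) y := by
    intro a b x y
    have hmul : g ^ b * g ^ (a - b) = g ^ a := by
      rw [← zpow_add]; congr 1; ring
    have h1 : (g ^ b) ((g ^ (a - b)) x) = (g ^ a) x := by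
      rw [← hmul]; rfl
    rw [← h1, hBz]
  -- the four structural facts about φ(t,r,d) = polar Q ((g^d) v_t) (v_r)
  have hφ1 : ∀ t' ∈ Finset.Icc 1 σ, ∀ t ∈ Finset.Icc 1 σ, t' < t →
      ∀ d : ℤ, -(p t' : ℤ) ≤ d → d ≤ (p t' : ℤ) - 1 →
      QuadraticMap.polar Q ((g ^ d) (v t')) (v t) = 0 := by
    intro t' ht' t ht hlt d h1 h2
    rw [hBeq]
    exact hv1 t ht t' ht' hlt d h1 h2
  have hφ2 : ∀ t' ∈ Finset.Icc 1 σ, ∀ t ∈ Finset.Icc 1 σ, t < t' →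
      ∀ d : ℤ, -(p t : ℤ) + 1 ≤ d → d ≤ (p t : ℤ) →
      QuadraticMap.polar Q ((g ^ d) (v t')) (v t) = 0 := by
    intro t' ht' t ht hlt d h1 h2
    rw [QuadraticMap.polar_comm]
    have hcan : (g ^ (-d)) ((g ^ d) (v t')) = v t' := by
      have hmul : g ^ (-d) * g ^ d = 1 := by
        rw [← zpow_add]; norm_num
      calc (g ^ (-d)) ((g ^ d) (v t')) = (g ^ (-d) * g ^ d) (v t') := rfl
        _ = v t' := by rw [hmul]; rfl
    have h3 := hBz (-d) (v t) ((g ^ d) (v t'))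
    rw [hcan] at h3
    rw [← h3, hBeq]
    exact hv1 t' ht' t ht hlt (-d) (by omega) (by omega)
  have hφ3 : ∀ t ∈ Finset.Icc 1 σ, ∀ d : ℤ, -(p t : ℤ) + 1 ≤ d → d ≤ (p t : ℤ) - 1 →
      QuadraticMap.polar Q ((g ^ d) (v t)) (v t) = 0 := by
    intro t ht d h1 h2
    rw [QuadraticMap.polar_comm, hBeq]
    exact hv2 t ht d h1 h2
  have hφ4 : ∀ t ∈ Finset.Icc 1 σ,
      QuadraticMap.polar Q ((g ^ (p t : ℤ)) (v t)) (v t) ≠ 0 := by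
    intro t ht
    rw [QuadraticMap.polar_comm, hBeq]
    exact hv3 t ht
  -- monotonicity of p
  have hmono' : ∀ a b : ℕ, 1 ≤ a → a ≤ b → b ≤ σ → p b ≤ p a := by
    intro a b ha hab hb
    induction b with
    | zero => omega
    | succ b ihb =>
      rcases Nat.lt_or_ge a (b + 1) with h | h
      · have hab' : a ≤ b := by omega
        exact le_trans (hmono b (by omega) (by omega)) (ihb hab' (by omega))
      · have hh : a = b + 1 := by omega
        rw [hh]
  -- membership helper
  have hmem : ∀ t0 : Fin σ, t0.1 + 1 ∈ Finset.Icc 1 σ := by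
    intro t0
    simp only [Finset.mem_Icc]
    exact ⟨by omega, by have := t0.2; omega⟩
  -- linear independence
  have hLI : LinearIndependent 𝕜
      (fun ti : Σ t : Fin σ, Fin (2 * p (t.1 + 1)) =>
        (g ^ ((ti.2 : ℤ) - (p (ti.1.1 + 1) : ℤ))) (v (ti.1.1 + 1))) := by
    rw [Fintype.linearIndependent_iff]
    intro c hc
    suffices H : ∀ N : ℕ, ∀ ti : Σ t : Fin σ, Fin (2 * p (t.1 + 1)),
        (2 * p (ti.1.1 + 1) - 1 - ti.2.1) * σ + ti.1.1 = N → c ti = 0 by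
      intro ti; exact H _ ti rfl
    intro N
    induction N using Nat.strong_induction_on with
    | _ N IH =>
      rintro ⟨t0, i0⟩ hμ
      dsimp only at hμ
      have hit : (i0 : ℕ) < 2 * p (t0.1 + 1) := i0.2
      have hpt : 1 ≤ p (t0.1 + 1) := hp1 _ (by omega) (by have := t0.2; omega)
      have hσ0 : 0 < σ := hσ
      have ht02 : t0.1 < σ := t0.2
      -- pair the relation with (g ^ β) v_t, β = i - 2 p_t
      have hexp : (∑ ti' : Σ t : Fin σ, Fin (2 * p (t.1 + 1)),
          c ti' * QuadraticMap.polar Q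
            ((g ^ ((ti'.2 : ℤ) - (p (ti'.1.1 + 1) : ℤ))) (v (ti'.1.1 + 1)))
            ((g ^ ((i0 : ℤ) - 2 * (p (t0.1 + 1) : ℤ))) (v (t0.1 + 1)))) = 0 := by
        have h0 : Q.polarBilin (∑ ti' : Σ t : Fin σ, Fin (2 * p (t.1 + 1)),
            c ti' • (g ^ ((ti'.2 : ℤ) - (p (ti'.1.1 + 1) : ℤ))) (v (ti'.1.1 + 1)))
            ((g ^ ((i0 : ℤ) - 2 * (p (t0.1 + 1) : ℤ))) (v (t0.1 + 1))) = 0 := by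
          rw [hc]; simp
        rw [map_sum] at h0
        rw [LinearMap.sum_apply] at h0
        simpa [smul_eq_mul] using h0
      rw [Finset.sum_eq_single (⟨t0, i0⟩ : Σ t : Fin σ, Fin (2 * p (t.1 + 1)))] at hexp
      · -- the main term: coefficient times a nonzero pairing
        dsimp only at hexp
        have hkey : QuadraticMap.polar Q
            ((g ^ ((i0 : ℤ) - (p (t0.1 + 1) : ℤ))) (v (t0.1 + 1)))
            ((g ^ ((i0 : ℤ) - 2 * (p (t0.1 + 1) : ℤ))) (v (t0.1 + 1))) ≠ 0 := by
          rw [hBshift]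
          rw [show (i0 : ℤ) - (p (t0.1 + 1) : ℤ)
              - ((i0 : ℤ) - 2 * (p (t0.1 + 1) : ℤ)) = (p (t0.1 + 1) : ℤ) by ring]
          exact hφ4 _ (hmem t0)
        rcases mul_eq_zero.mp hexp with h | h
        · exact h
        · exact absurd h hkey
      · -- all the other terms vanish
        rintro ⟨t0', i0'⟩ - hne
        dsimp only
        have hit' : (i0' : ℕ) < 2 * p (t0'.1 + 1) := i0'.2
        have ht02' : t0'.1 < σ := t0'.2
        rw [hBshift]
        rcases lt_trichotomy t0'.1 t0.1 with hlt | heq | hgt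
        · -- t' < t
          have htt' : t0'.1 + 1 < t0.1 + 1 := by omega
          by_cases hcase : ((i0' : ℤ) - (p (t0'.1 + 1) : ℤ)
              - ((i0 : ℤ) - 2 * (p (t0.1 + 1) : ℤ))) ≤ (p (t0'.1 + 1) : ℤ) - 1
          · rw [hφ1 _ (hmem t0') _ (hmem t0) htt' _ (by omega) hcase, mul_zero]
          · -- induction hypothesis applies
            have hle : (2 * p (t0'.1 + 1) - 1 - (i0' : ℕ)) ≤ (2 * p (t0.1 + 1) - 1 - (i0 : ℕ)) := by
              omega
            have h1 : (2 * p (t0'.1 + 1) - 1 - (i0' : ℕ)) * σ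
                ≤ (2 * p (t0.1 + 1) - 1 - (i0 : ℕ)) * σ := Nat.mul_le_mul_right σ hle
            have hμ' : (2 * p (t0'.1 + 1) - 1 - (i0' : ℕ)) * σ + t0'.1 < N := by omega
            rw [IH _ hμ' ⟨t0', i0'⟩ rfl, zero_mul]
        · -- same block
          have heqf : t0' = t0 := Fin.ext heq
          subst heqf
          have hne' : (i0' : ℕ) ≠ (i0 : ℕ) := by
            intro h
            exact hne (by rw [show i0' = i0 from Fin.ext h])
          rcases Nat.lt_or_ge (i0' : ℕ) (i0 : ℕ) with hlt' | hge'
          · rw [hφ3 _ (hmem t0') _ (by omega) (by omega), mul_zero]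
          · have hgt' : (i0 : ℕ) < (i0' : ℕ) := by omega
            have hle : (2 * p (t0'.1 + 1) - 1 - (i0' : ℕ)) + 1
                ≤ (2 * p (t0'.1 + 1) - 1 - (i0 : ℕ)) := by omega
            have h1 : ((2 * p (t0'.1 + 1) - 1 - (i0' : ℕ)) + 1) * σ
                ≤ (2 * p (t0'.1 + 1) - 1 - (i0 : ℕ)) * σ := Nat.mul_le_mul_right σ hle
            have h2 : ((2 * p (t0'.1 + 1) - 1 - (i0' : ℕ)) + 1) * σ
                = (2 * p (t0'.1 + 1) - 1 - (i0' : ℕ)) * σ + σ := by ring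
            have hμ' : (2 * p (t0'.1 + 1) - 1 - (i0' : ℕ)) * σ + t0'.1 < N := by omega
            rw [IH _ hμ' ⟨t0', i0'⟩ rfl, zero_mul]
        · -- t' > t
          have htt' : t0.1 + 1 < t0'.1 + 1 := by omega
          have hple : p (t0'.1 + 1) ≤ p (t0.1 + 1) :=
            hmono' _ _ (by omega) (by omega) (by omega)
          by_cases hcase : ((i0' : ℤ) - (p (t0'.1 + 1) : ℤ)
              - ((i0 : ℤ) - 2 * (p (t0.1 + 1) : ℤ))) ≤ (p (t0.1 + 1) : ℤ)
          · rw [hφ2 _ (hmem t0') _ (hmem t0) htt' _ (by omega) hcase, mul_zero]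
          · -- induction hypothesis applies
            have hle : (2 * p (t0'.1 + 1) - 1 - (i0' : ℕ)) + 1
                ≤ (2 * p (t0.1 + 1) - 1 - (i0 : ℕ)) := by omega
            have h1 : ((2 * p (t0'.1 + 1) - 1 - (i0' : ℕ)) + 1) * σ
                ≤ (2 * p (t0.1 + 1) - 1 - (i0 : ℕ)) * σ := Nat.mul_le_mul_right σ hle
            have h2 : ((2 * p (t0'.1 + 1) - 1 - (i0' : ℕ)) + 1) * σ
                = (2 * p (t0'.1 + 1) - 1 - (i0' : ℕ)) * σ + σ := by ring
            have hμ' : (2 * p (t0'.1 + 1) - 1 - (i0' : ℕ)) * σ + t0'.1 < N := by omega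
            rw [IH _ hμ' ⟨t0', i0'⟩ rfl, zero_mul]
      · intro h
        exact absurd (Finset.mem_univ _) h
  refine ⟨hLI, ?_⟩
  -- spanning: 2n linearly independent vectors in a 2n-dimensional space
  have hNE : Nonempty (Σ t : Fin σ, Fin (2 * p (t.1 + 1))) := by
    refine ⟨⟨⟨0, by omega⟩, ⟨0, ?_⟩⟩⟩
    show 0 < 2 * p 1
    have := hp1 1 le_rfl hσ
    omega
  have hcard : Fintype.card (Σ t : Fin σ, Fin (2 * p (t.1 + 1))) = finrank 𝕜 V := by
    rw [hdimV, Fintype.card_sigma]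
    simp only [Fintype.card_fin]
    rw [← hpn, Finset.mul_sum]
    rw [show Finset.Icc 1 σ = Finset.Ico 1 (σ + 1) by rw [Finset.Ico_add_one_right_eq_Icc]]
    rw [Finset.sum_Ico_eq_sum_range]
    rw [Fin.sum_univ_eq_sum_range (fun k => 2 * p (k + 1)) σ]
    simp [add_comm]
  exact hLI.span_eq_top_of_card_eq_finrank hcard
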